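/- arXiv:2211.01826 — 4 statements merged into one kernel-verified Lean document; each statement's English description precedes it below -/
import Mathlib

section
/- The forgetful functor U : Lens → Cat both preserves and reflects monomorphisms; that is, a lens F : A → B is a monomorphism in the category Lens if and only if its get functor U F is a monomorphism in the category Cat of small categories and functors. -/
universe u

open CategoryTheory CategoryTheory.Limits

namespace LensPaper

section OutDefs

variable {A : Type*} [Category A] {B : Type*} [Category B] {C : Type*} [Category C]

/-- The "out-set" of an object: the collection of all morphisms out of `X`,
bundled with their targets. -/
def Out (X : A) : Type _ := Σ Y : A, X ⟶ Y

/-- The identity element of an out-set. -/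
def Out.id (X : A) : Out X := ⟨X, 𝟙 X⟩

/-- Composition of a morphism out of `X` with a morphism out of its target. -/
def Out.comp {X : A} (u : Out X) (v : Out u.1) : Out X := ⟨v.1, u.2 ≫ v.2⟩

/-- Transport of out-sets along an equality of objects. -/
def Out.cast {X Y : A} (h : X = Y) (u : Out X) : Out Y := ⟨u.1, eqToHom h.symm ≫ u.2⟩

@[simp] theorem Out.cast_rfl {X : A} (u : Out X) : Out.cast rfl u = u := by
  cases u; simp [Out.cast] <;> rfl

theorem Out.cast_cast {X Y Z : A} (h₁ : X = Y) (h₂ : Y = Z) (u : Out X) :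
    Out.cast h₂ (Out.cast h₁ u) = Out.cast (h₁.trans h₂) u := by
  subst h₁; subst h₂; simp

/-- The action of a functor on out-sets. -/
def mapOut (F : A ⥤ B) {X : A} (u : Out X) : Out (F.obj X) := ⟨F.obj u.1, F.map u.2⟩

theorem mapOut_cast (F : A ⥤ B) {X Y : A} (h : X = Y) (u : Out X) :
    mapOut F (Out.cast h u) = Out.cast (congrArg F.obj h) (mapOut F u) := by
  subst h; simp

/-- The set of all morphisms of a category, bundled with their endpoints. -/
def Mor (A : Type*) [Category A] : Type _ := Σ (X Y : A), X ⟶ Y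

/-- The action of a functor on morphisms, as a function on bundled morphisms. -/
def mapMor (F : A ⥤ B) : Mor A → Mor B := fun m => ⟨F.obj m.1, F.obj m.2.1, F.map m.2.2⟩

/-- The set of composable pairs of morphisms of a category. -/
def CompPair (A : Type*) [Category A] : Type _ := Σ (X Y Z : A), (X ⟶ Y) × (Y ⟶ Z)

/-- The action of a functor on composable pairs. -/
def mapCompPair (F : A ⥤ B) : CompPair A → CompPair B :=
  fun p => ⟨F.obj p.1, F.obj p.2.1, F.obj p.2.2.1, (F.map p.2.2.2.1, F.map p.2.2.2.2)⟩

/-- A functor is a discrete opfibration if every morphism out of `F.obj X`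
has a unique lift to a morphism out of `X`. -/
def IsDiscreteOpfibration (F : A ⥤ B) : Prop :=
  ∀ (X : A) (u : Out (F.obj X)), ∃! v : Out X, mapOut F v = u

/-- A cosieve is an injective-on-objects discrete opfibration. -/
def IsCosieve (F : A ⥤ B) : Prop :=
  IsDiscreteOpfibration F ∧ Function.Injective F.obj

end OutDefs

/-- An (asymmetric delta) lens: a get functor together with put functions
satisfying PutGet, PutId and PutPut. -/
structure DLens (A : Type*) (B : Type*) [Category A] [Category B] where
  get : A ⥤ B
  put : ∀ (X : A), Out (get.obj X) → Out X
  putGet : ∀ (X : A) (u : Out (get.obj X)), mapOut get (put X u) = u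
  putId : ∀ (X : A), put X (Out.id (get.obj X)) = Out.id X
  putPut : ∀ (X : A) (u : Out (get.obj X)) (v : Out u.1) (h : u.1 = get.obj (put X u).1),
      put X (u.comp v) = (put X u).comp (put (put X u).1 (Out.cast h v))

namespace DLens

variable {A : Type*} [Category A] {B : Type*} [Category B] {C : Type*} [Category C]

theorem put_cast (F : DLens A B) {X₁ X₂ : A} (e : X₁ = X₂) (u : Out (F.get.obj X₁)) :
    Out.cast e (F.put X₁ u) = F.put X₂ (Out.cast (congrArg F.get.obj e) u) := by
  subst e; simp

/-- The identity lens. -/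
def id (A : Type*) [Category A] : DLens A A where
  get := Functor.id A
  put X u := u
  putGet X u := rfl
  putId X := rfl
  putPut X u v h := by
    have hv : Out.cast h v = v := Out.cast_rfl v
    rw [hv]

/-- Composition of lenses. -/
def comp (F : DLens A B) (G : DLens B C) : DLens A C where
  get := F.get ⋙ G.get
  put X u := F.put X (G.put (F.get.obj X) u)
  putGet X u := by
    show mapOut G.get (mapOut F.get (F.put X (G.put (F.get.obj X) u))) = u
    rw [F.putGet, G.putGet]
  putId X := by
    show F.put X (G.put (F.get.obj X) (Out.id (G.get.obj (F.get.obj X)))) = Out.id X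
    rw [G.putId, F.putId]
  putPut X u v h := by
    have h₁ : u.1 = G.get.obj (G.put (F.get.obj X) u).1 :=
      (congrArg Sigma.fst (G.putGet (F.get.obj X) u)).symm
    show F.put X (G.put (F.get.obj X) (u.comp v)) = _
    rw [G.putPut (F.get.obj X) u v h₁]
    have h₂ : (G.put (F.get.obj X) u).1 =
        F.get.obj (F.put X (G.put (F.get.obj X) u)).1 :=
      (congrArg Sigma.fst (F.putGet X (G.put (F.get.obj X) u))).symm
    rw [F.putPut X (G.put (F.get.obj X) u) _ h₂]
    rw [put_cast G h₂, Out.cast_cast]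

end DLens

/-- The category of small categories and (asymmetric delta) lenses. -/
def LensCat : Type (u + 1) := Cat.{u, u}

/-- Regard a small category as an object of the category of lenses. -/
def LensCat.of (C : Cat.{u, u}) : LensCat.{u} := C

/-- The underlying small category of an object of the category of lenses. -/
def LensCat.toCat (A : LensCat.{u}) : Cat.{u, u} := A

instance : Category.{u} LensCat.{u} where
  Hom A B := DLens A.toCat B.toCat
  id A := DLens.id A.toCat
  comp F G := F.comp G
  id_comp F := rfl
  comp_id F := rfl
  assoc F G H := rfl

/-- The get functor of a lens, i.e. a morphism of `LensCat` regarded as a `DLens`. -/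
def LensCat.get {A B : LensCat.{u}} (F : A ⟶ B) : A.toCat ⟶ B.toCat := (DLens.get F).toCatHom

/-- The identity-on-objects forgetful functor from the category of lenses to the
category of small categories and functors, sending a lens to its get functor. -/
def lensForget : LensCat.{u} ⥤ Cat.{u, u} where
  obj A := A.toCat
  map F := (DLens.get F).toCatHom
  map_id A := rfl
  map_comp F G := rfl

end LensPaper
open CategoryTheory CategoryTheory.Limits LensPaper

section Aux

open LensPaper

variable {A : Type*} [Category A] {B : Type*} [Category B]

namespace LensPaper

theorem mapOut_id' (F : A ⥤ B) (X : A) :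
    mapOut F (Out.id X) = Out.id (F.obj X) := by
  simp [mapOut, Out.id] <;> rfl

theorem mapOut_comp' (F : A ⥤ B) {X : A} (u : Out X) (v : Out u.1) :
    mapOut F (u.comp v) = (mapOut F u).comp (mapOut F v) := by
  simp [mapOut, Out.comp] <;> rfl

theorem Out.cast_id' {X Y : A} (h : X = Y) :
    Out.cast h (Out.id X) = Out.id Y := by
  subst h; simp

theorem Out.cast_comp {X Y : A} (h : X = Y) (u : Out X) (v : Out u.1) :
    Out.cast h (u.comp v) = (Out.cast h u).comp v := by
  subst h
  obtain ⟨U, f⟩ := u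
  simp [Out.cast, Out.comp] <;> rfl

theorem Out.cast_eq_self {X : A} (h : X = X) (u : Out X) : Out.cast h u = u := by
  have he : h = rfl := rfl
  rw [he, Out.cast_rfl]

theorem Out.comp_congr {X : A} {u u' : Out X} (h : u = u') (v : Out u.1) :
    u.comp v = u'.comp (Out.cast (congrArg Sigma.fst h) v) := by
  subst h; rw [Out.cast_eq_self]

theorem Out.eq_of_cast_eq {X Y : A} (h : X = Y) {u : Out X} {v : Out Y}
    (huv : Out.cast h u = v) :
    ∃ e : u.1 = v.1, u.2 = eqToHom h ≫ v.2 ≫ eqToHom e.symm := by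
  subst h
  obtain rfl : u = v := by simpa using huv
  exact ⟨rfl, by simp⟩

theorem Out.cast_eq_of {X Y : A} (h : X = Y) (u : Out X) (v : Out Y)
    (e : u.1 = v.1) (hm : u.2 = eqToHom h ≫ v.2 ≫ eqToHom e.symm) :
    Out.cast h u = v := by
  subst h
  obtain ⟨U, f⟩ := u
  obtain ⟨V, g⟩ := v
  dsimp at e
  subst e
  dsimp at hm
  simp only [eqToHom_refl, Category.id_comp, Category.comp_id] at hm
  simp [Out.cast, hm] <;> rfl

theorem DLens.ext_lemma {L M : DLens A B} (hg : L.get = M.get)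
    (hp : ∀ (X : A) (u : Out (L.get.obj X)),
      L.put X u = M.put X (Out.cast (congrArg (fun G => G.obj X) hg) u)) : L = M := by
  obtain ⟨g, p, pg, pi, pp⟩ := L
  obtain ⟨g', p', pg', pi', pp'⟩ := M
  dsimp at hg
  subst hg
  obtain rfl : p = p' := by
    funext X u
    have := hp X u
    simpa using this
  rfl

theorem DLens.congr_get {L M : DLens A B} (h : L = M) : L.get = M.get := by rw [h]

theorem DLens.congr_put {L M : DLens A B} (h : L = M) (X : A)
    (u : Out (L.get.obj X)) :
    L.put X u = M.put X (Out.cast (congrArg (fun G => G.obj X) (DLens.congr_get h)) u) := by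
  subst h; simp

/-- Objects of the kernel pair of the get functor of a lens. -/
structure KPObj (F : DLens A B) : Type _ where
  Y₁ : A
  Y₂ : A
  h : F.get.obj Y₁ = F.get.obj Y₂

/-- Morphisms of the kernel pair of the get functor of a lens. -/
@[ext] structure KPHom {F : DLens A B} (c d : KPObj F) : Type _ where
  g₁ : c.Y₁ ⟶ d.Y₁
  g₂ : c.Y₂ ⟶ d.Y₂
  κ : Out.cast c.h (mapOut F.get ⟨d.Y₁, g₁⟩) = mapOut F.get ⟨d.Y₂, g₂⟩

instance KPcat (F : DLens A B) : Category (KPObj F) where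
  Hom c d := KPHom c d
  id c := { g₁ := 𝟙 c.Y₁, g₂ := 𝟙 c.Y₂,
            κ := by
              show Out.cast c.h (mapOut F.get (Out.id c.Y₁)) = mapOut F.get (Out.id c.Y₂)
              rw [mapOut_id', mapOut_id', Out.cast_id'] }
  comp {c d e} f g :=
    { g₁ := f.g₁ ≫ g.g₁, g₂ := f.g₂ ≫ g.g₂,
      κ := by
        show Out.cast c.h (mapOut F.get (Out.comp ⟨d.Y₁, f.g₁⟩ ⟨e.Y₁, g.g₁⟩))
          = mapOut F.get (Out.comp ⟨d.Y₂, f.g₂⟩ ⟨e.Y₂, g.g₂⟩)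
        erw [mapOut_comp', mapOut_comp', Out.cast_comp, Out.comp_congr f.κ]
        exact congrArg (fun w => Out.comp (mapOut F.get ⟨d.Y₂, f.g₂⟩) w) g.κ }
  id_comp f := by apply KPHom.ext <;> simp
  comp_id f := by apply KPHom.ext <;> simp
  assoc f g h := by apply KPHom.ext <;> simp

variable (F : DLens A B)

/-- Helper to build an element of an out-set in the kernel-pair category. -/
def mkPut (c : KPObj F) (a₁ : Out c.Y₁) (a₂ : Out c.Y₂)
    (κ : Out.cast c.h (mapOut F.get a₁) = mapOut F.get a₂) : Out c :=
  ⟨⟨a₁.1, a₂.1, congrArg Sigma.fst κ⟩, ⟨a₁.2, a₂.2, κ⟩⟩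

theorem mkPut_congr (c : KPObj F) {a₁ a₁' : Out c.Y₁} {a₂ a₂' : Out c.Y₂}
    (h₁ : a₁ = a₁') (h₂ : a₂ = a₂') (κ : _) (κ' : _) :
    mkPut F c a₁ a₂ κ = mkPut F c a₁' a₂' κ' := by
  subst h₁; subst h₂; rfl

/-- The first projection lens out of the kernel pair. -/
def proj₁ : DLens (KPObj F) A where
  get := { obj := fun c => c.Y₁, map := fun f => f.g₁,
           map_id := fun _ => rfl, map_comp := fun _ _ => rfl }
  put c a := mkPut F c a (F.put c.Y₂ (Out.cast c.h (mapOut F.get a)))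
    (F.putGet c.Y₂ (Out.cast c.h (mapOut F.get a))).symm
  putGet c a := rfl
  putId c := by
    have h2 : F.put c.Y₂ (Out.cast c.h (mapOut F.get (Out.id c.Y₁))) = Out.id c.Y₂ := by
      rw [mapOut_id', Out.cast_id', F.putId]
    refine (mkPut_congr F c rfl h2 _ ?_).trans ?_
    · rw [mapOut_id', Out.cast_id', mapOut_id']
    · cases c; rfl
  putPut c u v hh := by
    have hv : Out.cast hh v = v := Out.cast_eq_self hh v
    have h2 : F.put c.Y₂ (Out.cast c.h (mapOut F.get (u.comp v)))
        = (F.put c.Y₂ (Out.cast c.h (mapOut F.get u))).comp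
            (F.put (F.put c.Y₂ (Out.cast c.h (mapOut F.get u))).1
              (Out.cast (congrArg Sigma.fst
                (F.putGet c.Y₂ (Out.cast c.h (mapOut F.get u))).symm) (mapOut F.get v))) := by
      erw [mapOut_comp', Out.cast_comp]
      exact F.putPut c.Y₂ _ _ _
    have kap : Out.cast c.h (mapOut F.get (u.comp v))
        = mapOut F.get ((F.put c.Y₂ (Out.cast c.h (mapOut F.get u))).comp
            (F.put (F.put c.Y₂ (Out.cast c.h (mapOut F.get u))).1
              (Out.cast (congrArg Sigma.fst
                (F.putGet c.Y₂ (Out.cast c.h (mapOut F.get u))).symm) (mapOut F.get v)))) :=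
      (F.putGet c.Y₂ _).symm.trans (congrArg (mapOut F.get) h2)
    refine (mkPut_congr F c rfl h2 _ kap).trans ?_
    rw [hv]
    rfl

/-- The second projection lens out of the kernel pair. -/
def proj₂ : DLens (KPObj F) A where
  get := { obj := fun c => c.Y₂, map := fun f => f.g₂,
           map_id := fun _ => rfl, map_comp := fun _ _ => rfl }
  put c a := mkPut F c (F.put c.Y₁ (Out.cast c.h.symm (mapOut F.get a))) a
    (by rw [F.putGet c.Y₁ (Out.cast c.h.symm (mapOut F.get a)), Out.cast_cast,
      Out.cast_eq_self])
  putGet c a := rfl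
  putId c := by
    have h2 : F.put c.Y₁ (Out.cast c.h.symm (mapOut F.get (Out.id c.Y₂))) = Out.id c.Y₁ := by
      rw [mapOut_id', Out.cast_id', F.putId]
    refine (mkPut_congr F c h2 rfl _ ?_).trans ?_
    · rw [mapOut_id', Out.cast_id', mapOut_id']
    · cases c; rfl
  putPut c u v hh := by
    have hv : Out.cast hh v = v := Out.cast_eq_self hh v
    have h2 : F.put c.Y₁ (Out.cast c.h.symm (mapOut F.get (u.comp v)))
        = (F.put c.Y₁ (Out.cast c.h.symm (mapOut F.get u))).comp
            (F.put (F.put c.Y₁ (Out.cast c.h.symm (mapOut F.get u))).1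
              (Out.cast (congrArg Sigma.fst
                (F.putGet c.Y₁ (Out.cast c.h.symm (mapOut F.get u))).symm)
                (mapOut F.get v))) := by
      erw [mapOut_comp', Out.cast_comp]
      exact F.putPut c.Y₁ _ _ _
    have kap : Out.cast c.h (mapOut F.get ((F.put c.Y₁ (Out.cast c.h.symm (mapOut F.get u))).comp
            (F.put (F.put c.Y₁ (Out.cast c.h.symm (mapOut F.get u))).1
              (Out.cast (congrArg Sigma.fst
                (F.putGet c.Y₁ (Out.cast c.h.symm (mapOut F.get u))).symm)
                (mapOut F.get v)))))
        = mapOut F.get (u.comp v) := by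
      rw [← h2, F.putGet, Out.cast_cast, Out.cast_eq_self]
    refine (mkPut_congr F c h2 rfl _ kap).trans ?_
    rw [hv]
    rfl

theorem comp_eq : (proj₁ F).comp F = (proj₂ F).comp F := by
  refine DLens.ext_lemma (CategoryTheory.Functor.ext (fun c => c.h) ?_) ?_
  · intro c d f
    obtain ⟨e, hm⟩ := Out.eq_of_cast_eq c.h f.κ
    exact hm
  · intro c u
    show (proj₁ F).put c (F.put c.Y₁ u) = (proj₂ F).put c (F.put c.Y₂ (Out.cast c.h u))
    have h₂ : F.put c.Y₂ (Out.cast c.h (mapOut F.get (F.put c.Y₁ u)))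
        = F.put c.Y₂ (Out.cast c.h u) := by erw [F.putGet]
    have h₁' : F.put c.Y₁ (Out.cast c.h.symm (mapOut F.get (F.put c.Y₂ (Out.cast c.h u))))
        = F.put c.Y₁ u := by erw [F.putGet, Out.cast_cast, Out.cast_eq_self]
    have κmid : Out.cast c.h (mapOut F.get (F.put c.Y₁ u))
        = mapOut F.get (F.put c.Y₂ (Out.cast c.h u)) :=
      (congrArg (Out.cast c.h) (F.putGet c.Y₁ u)).trans (F.putGet c.Y₂ _).symm
    exact (mkPut_congr F c rfl h₂ _ κmid).trans (mkPut_congr F c h₁' rfl _ κmid).symm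

/-- Injectivity of a functor on objects and on morphisms. -/
def GetInj (Fg : A ⥤ B) : Prop :=
  Function.Injective Fg.obj ∧ Function.Injective (mapMor Fg)

theorem out_snd {X U : A} {f g : X ⟶ U} (h : (⟨U, f⟩ : Out X) = ⟨U, g⟩) : f = g := by
  injection h with h1 h2

theorem mor_snd {X Y : A} {f g : X ⟶ Y} (h : (⟨X, Y, f⟩ : Mor A) = ⟨X, Y, g⟩) : f = g := by
  injection h with h1 h2
  injection h2 with h3 h4

theorem mor_mk_eq_iff {X₁ Y₁ X₂ Y₂ : A} {f₁ : X₁ ⟶ Y₁} {f₂ : X₂ ⟶ Y₂} :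
    (⟨X₁, Y₁, f₁⟩ : Mor A) = ⟨X₂, Y₂, f₂⟩ ↔
      ∃ (h1 : X₁ = X₂) (h2 : Y₁ = Y₂), f₁ = eqToHom h1 ≫ f₂ ≫ eqToHom h2.symm := by
  constructor
  · intro h
    have h1 : X₁ = X₂ := congrArg Sigma.fst h
    subst h1
    have h2 : Y₁ = Y₂ := congrArg (fun m : Mor A => m.2.1) h
    subst h2
    have h3 : f₁ = f₂ := mor_snd h
    exact ⟨rfl, rfl, by simp [h3]⟩
  · rintro ⟨rfl, rfl, h⟩
    simp only [eqToHom_refl, Category.id_comp, Category.comp_id] at h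
    rw [h]

theorem mapOut_inj {Fg : A ⥤ B} (h : GetInj Fg) {X : A} :
    Function.Injective (fun u : Out X => mapOut Fg u) := by
  rintro ⟨U, f⟩ ⟨V, g⟩ huv
  have e1 : U = V := h.1 (congrArg Sigma.fst huv)
  subst e1
  have hf : Fg.map f = Fg.map g := out_snd huv
  have hm : mapMor Fg ⟨X, U, f⟩ = mapMor Fg ⟨X, U, g⟩ := by simp [mapMor, hf] <;> rfl
  have h3 := h.2 hm
  have : f = g := mor_snd h3
  rw [this]

theorem put_mapOut (F : DLens A B) (h : GetInj F.get) (X : A) (v : Out X) :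
    F.put X (mapOut F.get v) = v :=
  mapOut_inj h (F.putGet X (mapOut F.get v))

end LensPaper

/-- The walking-arrow category, as a `u`-small category. -/
def TwoObj : Type u := ULift Bool

instance : Category.{u} TwoObj.{u} where
  Hom x y := ULift.{u} (PLift (x.down = true → y.down = true))
  id x := ⟨⟨fun h => h⟩⟩
  comp f g := ⟨⟨fun h => g.down.down (f.down.down h)⟩⟩
  id_comp f := rfl
  comp_id f := rfl
  assoc f g h := rfl

namespace LensPaper

/-- The functor out of the walking arrow classifying a morphism. -/
def twoFunctor {X Y : A} (f : X ⟶ Y) : TwoObj.{u} ⥤ A where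
  obj b := bif b.down then Y else X
  map {b c} g :=
    match b, c, g with
    | ⟨false⟩, ⟨false⟩, _ => 𝟙 X
    | ⟨false⟩, ⟨true⟩, _ => f
    | ⟨true⟩, ⟨true⟩, _ => 𝟙 Y
    | ⟨true⟩, ⟨false⟩, g => absurd (g.down.down rfl) (by simp)
  map_id b := by cases b with | up b => cases b <;> rfl
  map_comp {b c d} g h := by
    cases b with | up b =>
    cases c with | up c =>
    cases d with | up d =>
    cases b <;> cases c <;> cases d <;>
      first
        | exact absurd (g.down.down rfl) Bool.false_ne_true
        | exact absurd (h.down.down rfl) Bool.false_ne_true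
        | simp

end LensPaper

end Aux


/-- The forgetful functor `U : Lens ⥤ Cat` preserves and reflects
monomorphisms: a lens is a monomorphism in `Lens` iff its get functor is a
monomorphism in `Cat`. -/
theorem lensForget_mono_iff (A B : LensCat.{u}) (F : A ⟶ B) :
    Mono F ↔ Mono (lensForget.map F) := by
  constructor
  · intro hF
    -- The two projection lenses out of the kernel pair agree after composing with `F`.
    let C : LensCat.{u} := LensCat.of (Cat.of (KPObj F))
    let p₁ : C ⟶ A := proj₁ F
    let p₂ : C ⟶ A := proj₂ F
    have hc : p₁ ≫ F = p₂ ≫ F := comp_eq F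
    have hps : p₁ = p₂ := hF.right_cancellation _ _ hc
    have hget : (proj₁ F).get = (proj₂ F).get := DLens.congr_get hps
    have hobj : Function.Injective F.get.obj := fun X₁ X₂ h =>
      Functor.congr_obj hget ⟨X₁, X₂, h⟩
    have hmor : Function.Injective (mapMor F.get) := by
      rintro ⟨X₁, Y₁, f₁⟩ ⟨X₂, Y₂, f₂⟩ hm
      obtain ⟨hX, hY, hf⟩ := mor_mk_eq_iff.mp hm
      have κ : Out.cast hX (mapOut F.get ⟨Y₁, f₁⟩) = mapOut F.get ⟨Y₂, f₂⟩ :=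
        Out.cast_eq_of hX _ _ hY hf
      have eX : X₁ = X₂ := Functor.congr_obj hget ⟨X₁, X₂, hX⟩
      have eY : Y₁ = Y₂ := Functor.congr_obj hget ⟨Y₁, Y₂, hY⟩
      have ef := Functor.congr_hom hget
        (show (⟨X₁, X₂, hX⟩ : KPObj F) ⟶ ⟨Y₁, Y₂, hY⟩ from ⟨f₁, f₂, κ⟩)
      exact mor_mk_eq_iff.mpr ⟨eX, eY, ef⟩
    refine ⟨fun {D} ⟨P⟩ ⟨Q⟩ hPQ' => ?_⟩
    have hPQ : P ⋙ F.get = Q ⋙ F.get := congrArg Cat.Hom.toFunctor hPQ'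
    refine Cat.Hom.ext (CategoryTheory.Functor.ext (fun X => hobj (Functor.congr_obj hPQ X)) ?_)
    intro X Y f
    have hmm : mapMor F.get ⟨P.obj X, P.obj Y, P.map f⟩
        = mapMor F.get ⟨Q.obj X, Q.obj Y, Q.map f⟩ :=
      mor_mk_eq_iff.mpr ⟨Functor.congr_obj hPQ X, Functor.congr_obj hPQ Y,
        Functor.congr_hom hPQ f⟩
    obtain ⟨h1, h2, h3⟩ := mor_mk_eq_iff.mp (hmor hmm)
    exact h3
  · intro hFg
    have hobj : Function.Injective F.get.obj := by
      intro X₁ X₂ h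
      let P : Cat.of (Discrete PUnit.{u + 1}) ⟶ A.toCat := ((Functor.const _).obj X₁).toCatHom
      let Q : Cat.of (Discrete PUnit.{u + 1}) ⟶ A.toCat := ((Functor.const _).obj X₂).toCatHom
      have hcmp : P ≫ lensForget.map F = Q ≫ lensForget.map F := by
        refine Cat.Hom.ext (CategoryTheory.Functor.ext (fun _ => h) ?_)
        intro x y f
        show F.get.map (𝟙 X₁) = eqToHom _ ≫ F.get.map (𝟙 X₂) ≫ eqToHom _
        simp
        erw [eqToHom_trans, eqToHom_refl]
      exact Functor.congr_obj (congrArg Cat.Hom.toFunctor (hFg.right_cancellation P Q hcmp)) ⟨PUnit.unit⟩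
    have hmor : Function.Injective (mapMor F.get) := by
      rintro ⟨X₁, Y₁, f₁⟩ ⟨X₂, Y₂, f₂⟩ hm
      obtain ⟨hX, hY, hf⟩ := mor_mk_eq_iff.mp hm
      let P : Cat.of TwoObj.{u} ⟶ A.toCat := (twoFunctor f₁).toCatHom
      let Q : Cat.of TwoObj.{u} ⟶ A.toCat := (twoFunctor f₂).toCatHom
      have hcmp : P ≫ lensForget.map F = Q ≫ lensForget.map F := by
        refine Cat.Hom.ext (CategoryTheory.Functor.ext ?_ ?_)
        · rintro ⟨b⟩
          cases b
          · exact hX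
          · exact hY
        · rintro ⟨b⟩ ⟨c⟩ g
          cases b <;> cases c
          · show F.get.map (𝟙 X₁) = eqToHom _ ≫ F.get.map (𝟙 X₂) ≫ eqToHom _
            simp
            erw [eqToHom_trans, eqToHom_refl]
          · exact hf
          · exact absurd (g.down.down rfl) Bool.false_ne_true
          · show F.get.map (𝟙 Y₁) = eqToHom _ ≫ F.get.map (𝟙 Y₂) ≫ eqToHom _
            simp
            erw [eqToHom_trans, eqToHom_refl]
      have hPQ := congrArg Cat.Hom.toFunctor (hFg.right_cancellation P Q hcmp)
      have eX : X₁ = X₂ := Functor.congr_obj hPQ ⟨false⟩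
      have eY : Y₁ = Y₂ := Functor.congr_obj hPQ ⟨true⟩
      have ef := Functor.congr_hom hPQ (X := ⟨false⟩) (Y := ⟨true⟩) ⟨⟨fun _ => rfl⟩⟩
      exact mor_mk_eq_iff.mpr ⟨eX, eY, ef⟩
    refine ⟨fun {Z} G H hGH => ?_⟩
    have hg2 : DLens.get G = DLens.get H :=
      congrArg Cat.Hom.toFunctor (hFg.right_cancellation (DLens.get G).toCatHom (DLens.get H).toCatHom (Cat.Hom.ext (DLens.congr_get hGH)))
    refine DLens.ext_lemma hg2 ?_
    intro X v
    have eX : (DLens.get G).obj X = (DLens.get H).obj X := Functor.congr_obj hg2 X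
    have hput := DLens.congr_put hGH X (mapOut (DLens.get F) v)
    have hcast : Out.cast
          (congrArg (fun G' : ↑Z.toCat ⥤ ↑B.toCat => G'.obj X) (DLens.congr_get hGH))
          (mapOut (DLens.get F) v)
        = mapOut (DLens.get F) (Out.cast eX v) := (mapOut_cast (DLens.get F) eX v).symm
    calc DLens.put G X v
        = DLens.put G X (DLens.put F ((DLens.get G).obj X) (mapOut (DLens.get F) v)) := by
          rw [put_mapOut F ⟨hobj, hmor⟩]
      _ = DLens.put H X (DLens.put F ((DLens.get H).obj X) (Out.cast
            (congrArg (fun G' : ↑Z.toCat ⥤ ↑B.toCat => G'.obj X) (DLens.congr_get hGH))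
            (mapOut (DLens.get F) v))) := hput
      _ = DLens.put H X (DLens.put F ((DLens.get H).obj X)
            (mapOut (DLens.get F) (Out.cast eX v))) := by erw [hcast]
      _ = DLens.put H X (Out.cast eX v) := by rw [put_mapOut F ⟨hobj, hmor⟩]
end

section
/- Every lens F : A → B admits a factorisation F = M ∘ E in the category Lens in which the get functor of E is surjective both on objects and on morphisms and M is a monomorphism in Lens. -/
universe u

open CategoryTheory CategoryTheory.Limits

open CategoryTheory CategoryTheory.Limits LensPaper


namespace LensFact
open LensPaper

universe v

variable {A : Type u} [Category.{v} A] {B : Type u} [Category.{v} B]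

/-- The image predicate of a lens's get functor. -/
def P (F : DLens A B) : B → Prop := fun Y => ∃ X, F.get.obj X = Y

theorem closed (F : DLens A B) {X Y : B} (hX : P F X) (f : X ⟶ Y) : P F Y := by
  obtain ⟨X₀, rfl⟩ := hX
  exact ⟨(F.put X₀ ⟨Y, f⟩).1, congrArg Sigma.fst (F.putGet X₀ ⟨Y, f⟩)⟩

/-- The image category of a lens. -/
def Im (F : DLens A B) : Type u := ObjectProperty.FullSubcategory (P F)

instance (F : DLens A B) : Category.{v} (Im F) :=
  ObjectProperty.FullSubcategory.category (P F)

/-- Forget the image predicate on an out-set. -/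
def toB {F : DLens A B} {X : Im F} (u : Out X) : Out X.obj := ⟨u.1.obj, u.2.hom⟩

theorem toB_cast {F : DLens A B} {X Y : Im F} (h : X = Y) (v : Out X) :
    toB (Out.cast h v) = Out.cast (congrArg ObjectProperty.FullSubcategory.obj h) (toB v) := by
  subst h; rw [Out.cast_rfl, Out.cast_rfl]

/-- The monic part of the factorisation. -/
def Mlens (F : DLens A B) : DLens (Im F) B where
  get := ObjectProperty.ι (P F)
  put X u := ⟨⟨u.1, closed F X.property u.2⟩, ObjectProperty.homMk u.2⟩
  putGet X u := rfl
  putId X := rfl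
  putPut X u v h := by
    have hh : h = rfl := rfl
    rw [hh, Out.cast_rfl]
    rfl

theorem toB_inj {F : DLens A B} {X : Im F} {u u' : Out X} (h : toB u = toB u') :
    u = u' := by
  obtain ⟨⟨a, p⟩, ⟨f⟩⟩ := u
  obtain ⟨⟨a', p'⟩, ⟨f'⟩⟩ := u'
  have h' : (⟨a, f⟩ : Out X.obj) = ⟨a', f'⟩ := h
  injection h' with h1 h2
  subst h1
  rw [eq_of_heq h2]

theorem morB_inj {F : DLens A B} {m m' : Mor (Im F)}
    (h : (⟨m.1.obj, m.2.1.obj, m.2.2.hom⟩ : Mor B) = ⟨m'.1.obj, m'.2.1.obj, m'.2.2.hom⟩) :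
    m = m' := by
  obtain ⟨⟨a, p⟩, ⟨b, q⟩, ⟨f⟩⟩ := m
  obtain ⟨⟨a', p'⟩, ⟨b', q'⟩, ⟨f'⟩⟩ := m'
  have h' : (⟨a, b, f⟩ : Mor B) = ⟨a', b', f'⟩ := h
  injection h' with h1 h2
  subst h1
  have h2' := eq_of_heq h2
  injection h2' with h3 h4
  subst h3
  rw [eq_of_heq h4]

/-- The surjective part of the factorisation. -/
def Elens (F : DLens A B) : DLens A (Im F) where
  get := ObjectProperty.lift (P F) F.get (fun X => ⟨X, rfl⟩)
  put X u := F.put X (toB u)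
  putGet X u := by
    apply toB_inj
    exact F.putGet X (toB u)
  putId X := F.putId X
  putPut X u v h := by
    show F.put X (toB (u.comp v)) =
      Out.comp (F.put X (toB u)) (F.put _ (toB (Out.cast h v)))
    rw [toB_cast]
    exact F.putPut X (toB u) (toB v) (congrArg ObjectProperty.FullSubcategory.obj h)

theorem comp_eq (F : DLens A B) : (Elens F).comp (Mlens F) = F := rfl

theorem fs_obj_inj {Z : B → Prop} {X Y : ObjectProperty.FullSubcategory Z} (h : X.obj = Y.obj) :
    X = Y := by
  cases X; cases Y; cases h; rfl

theorem comp_incl_inj {Z : B → Prop} {C : Type*} [Category C]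
    {g₁ g₂ : C ⥤ ObjectProperty.FullSubcategory Z}
    (h : g₁ ⋙ ObjectProperty.ι Z = g₂ ⋙ ObjectProperty.ι Z) :
    g₁ = g₂ := by
  have hobj : ∀ X, g₁.obj X = g₂.obj X := fun X =>
    fs_obj_inj (Functor.congr_obj h X)
  refine CategoryTheory.Functor.ext hobj (fun X Y f => ?_)
  apply (ObjectProperty.ι Z).map_injective
  rw [Functor.map_comp, Functor.map_comp, eqToHom_map, eqToHom_map]
  exact Functor.congr_hom h f

end LensFact

/-- Every lens `F : A ⟶ B` factors in `Lens` as `F = M ∘ E` where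
the get functor of `E` is surjective on objects and on morphisms, and `M` is a
monomorphism in `Lens`. -/
theorem lens_image_factorisation (A B : LensCat.{u}) (F : A ⟶ B) :
    ∃ (I : LensCat.{u}) (E : A ⟶ I) (M : I ⟶ B),
      E ≫ M = F ∧
      Function.Surjective (DLens.get E).obj ∧
      Function.Surjective (mapMor (DLens.get E)) ∧
      Mono M := by
  refine ⟨LensCat.of (Cat.of (LensFact.Im F)), LensFact.Elens F, LensFact.Mlens F,
    LensFact.comp_eq F, ?_, ?_, ?_⟩
  · rintro ⟨Y, hY⟩
    obtain ⟨X, rfl⟩ := hY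
    exact ⟨X, rfl⟩
  · rintro ⟨⟨Xo, hX⟩, ⟨Yo, hYp⟩, ⟨f⟩⟩
    obtain ⟨X₁, rfl⟩ := hX
    refine ⟨⟨X₁, (F.put X₁ ⟨Yo, f⟩).1, (F.put X₁ ⟨Yo, f⟩).2⟩, ?_⟩
    apply LensFact.morB_inj
    exact congrArg (fun (o : Out (F.get.obj X₁)) => (⟨F.get.obj X₁, o.1, o.2⟩ : Mor B.toCat))
      (F.putGet X₁ ⟨Yo, f⟩)
  · refine ⟨fun {Z} G H w => ?_⟩
    have hg : G.get ⋙ ObjectProperty.ι (LensFact.P F) =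
        H.get ⋙ ObjectProperty.ι (LensFact.P F) := congrArg DLens.get w
    have hget : G.get = H.get := LensFact.comp_incl_inj hg
    obtain ⟨g₁, p₁, pg₁, pi₁, pp₁⟩ := G
    obtain ⟨g₂, p₂, pg₂, pi₂, pp₂⟩ := H
    dsimp at hget
    subst hget
    have w' : DLens.comp ⟨g₁, p₁, pg₁, pi₁, pp₁⟩ (LensFact.Mlens F) =
        DLens.comp ⟨g₁, p₂, pg₂, pi₂, pp₂⟩ (LensFact.Mlens F) := w
    have hputh : HEq (DLens.comp ⟨g₁, p₁, pg₁, pi₁, pp₁⟩ (LensFact.Mlens F)).put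
        (DLens.comp ⟨g₁, p₂, pg₂, pi₂, pp₂⟩ (LensFact.Mlens F)).put := by rw [w']
    have hput := eq_of_heq hputh
    have hp : p₁ = p₂ := by
      funext X u
      calc p₁ X u = (DLens.comp ⟨g₁, p₁, pg₁, pi₁, pp₁⟩ (LensFact.Mlens F)).put X
            (LensFact.toB u) := rfl
        _ = (DLens.comp ⟨g₁, p₂, pg₂, pi₂, pp₂⟩ (LensFact.Mlens F)).put X
            (LensFact.toB u) := by rw [hput]
        _ = p₂ X u := rfl
    subst hp
    rfl
end

section
/- Let F₁, F₂ : A → B be lenses with coequaliser E : B → C in the category Lens. Then (1) for each lens G : B → D with G ∘ F₁ = G ∘ F₂, for every object B of B and every morphism d of D with source G B, one has φ_{G,B} d = φ_{E,B}(E(φ_{G,B} d)); and (2) E is the unique lens with get functor U E satisfying E ∘ F₁ = E ∘ F₂. -/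
universe u

open CategoryTheory CategoryTheory.Limits

open CategoryTheory CategoryTheory.Limits LensPaper

/-- If `E` coequalises the lenses `F1, F2` in `Lens`, then
(1) for each lens `G` coforking `F1` and `F2`, each object `X` and each morphism
`u` out of `G X`, one has `φ_{G,X} u = φ_{E,X} (E (φ_{G,X} u))`; and
(2) `E` is the unique lens above its get functor coforking `F1` and `F2`. -/
theorem coequaliser_necessary_conditions (A B C : LensCat.{u}) (F1 F2 : A ⟶ B)
    (E : B ⟶ C) (w : F1 ≫ E = F2 ≫ E) (hE : IsColimit (Cofork.ofπ E w)) :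
    (∀ (D : LensCat.{u}) (G : B ⟶ D), F1 ≫ G = F2 ≫ G →
      ∀ (X : B.toCat) (u : Out ((DLens.get G).obj X)),
        DLens.put G X u = DLens.put E X (mapOut (DLens.get E) (DLens.put G X u))) ∧
    (∀ E' : B ⟶ C, DLens.get E' = DLens.get E → F1 ≫ E' = F2 ≫ E' → E' = E) := by
  have part1 : ∀ (D : LensCat.{u}) (G : B ⟶ D), F1 ≫ G = F2 ≫ G →
      ∀ (X : B.toCat) (u : Out ((DLens.get G).obj X)),
        DLens.put G X u = DLens.put E X (mapOut (DLens.get E) (DLens.put G X u)) := by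
    intro D G hG X u
    obtain ⟨H, hfac⟩ : ∃ H : C ⟶ D, E ≫ H = G :=
      ⟨hE.desc (Cofork.ofπ G hG), Cofork.IsColimit.π_desc hE⟩
    subst hfac
    change E.put X (H.put (E.get.obj X) u) =
      E.put X (mapOut E.get (E.put X (H.put (E.get.obj X) u)))
    rw [E.putGet]
  refine ⟨part1, ?_⟩
  intro E' hget hfork
  have key := part1 C E' hfork
  obtain ⟨gE, pE, pgE, piE, ppE⟩ := E
  obtain ⟨gE', pE', pgE', piE', ppE'⟩ := E'
  have hg : gE' = gE := hget
  subst hg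
  have : pE' = pE := by
    funext X u
    have h := key X u
    change pE' X u = pE X (mapOut gE' (pE' X u)) at h
    rw [pgE'] at h
    exact h
  subst this
  rfl
end

section
/- Every functor E : B → C between small categories that is surjective on composable pairs is an effective epimorphism in the category Cat of small categories and functors: E has a kernel pair F₁, F₂ : Ker E → B (the pullback of E along itself), and E is the coequaliser of F₁ and F₂. -/
universe u

open CategoryTheory CategoryTheory.Limits

open CategoryTheory CategoryTheory.Limits LensPaper


namespace Aux17

/-- Objects of the concrete kernel-pair category. -/
structure KerObj {B C : Type u} [Category.{u} B] [Category.{u} C] (E : B ⥤ C) : Type u where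
  left : B
  right : B
  eq : E.obj left = E.obj right

variable {B C : Type u} [Category.{u} B] [Category.{u} C] (E : B ⥤ C)

/-- Morphisms of the concrete kernel-pair category. -/
@[ext]
structure KerHom (p q : KerObj E) : Type u where
  left : p.left ⟶ q.left
  right : p.right ⟶ q.right
  eq : E.map left = eqToHom p.eq ≫ E.map right ≫ eqToHom q.eq.symm

instance : Category.{u} (KerObj E) where
  Hom := KerHom E
  id p := ⟨𝟙 _, 𝟙 _, by simp⟩
  comp f g := ⟨f.left ≫ g.left, f.right ≫ g.right, by
    simp [f.eq, g.eq]⟩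
  id_comp f := by apply KerHom.ext <;> simp
  comp_id f := by apply KerHom.ext <;> simp
  assoc f g h := by apply KerHom.ext <;> simp

/-- First projection. -/
def kerFst : KerObj E ⥤ B where
  obj p := p.left
  map f := f.left

/-- Second projection. -/
def kerSnd : KerObj E ⥤ B where
  obj p := p.right
  map f := f.right

theorem ker_w : kerFst E ⋙ E = kerSnd E ⋙ E := by
  refine CategoryTheory.Functor.ext (fun p => p.eq) (fun p q f => f.eq)

section CatLevel

variable (B C : Cat.{u, u}) (E : B ⟶ C)

/-- The kernel-pair category as an object of `Cat`. -/
def kerCat : Cat.{u, u} := Cat.of (KerObj E.toFunctor)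

/-- The first projection as a morphism of `Cat`. -/
def kerFstCat : kerCat B C E ⟶ B := (kerFst E.toFunctor).toCatHom

/-- The second projection as a morphism of `Cat`. -/
def kerSndCat : kerCat B C E ⟶ B := (kerSnd E.toFunctor).toCatHom

theorem ker_wCat : kerFstCat B C E ≫ E = kerSndCat B C E ≫ E := Cat.ext (ker_w _)

end CatLevel

end Aux17

namespace Aux17

theorem compPair_eq_elim {A : Type*} [Category A] {p q : LensPaper.CompPair A} (h : p = q) :
    ∃ (h₁ : p.1 = q.1) (h₂ : p.2.1 = q.2.1) (h₃ : p.2.2.1 = q.2.2.1),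
      p.2.2.2.1 = eqToHom h₁ ≫ q.2.2.2.1 ≫ eqToHom h₂.symm ∧
      p.2.2.2.2 = eqToHom h₂ ≫ q.2.2.2.2 ≫ eqToHom h₃.symm := by
  subst h; exact ⟨rfl, rfl, rfl, by simp, by simp⟩

end Aux17

set_option maxHeartbeats 2000000 in
open Aux17 in
/-- Every functor between small categories that is surjective
on composable pairs is an effective epimorphism in `Cat`: it has a kernel pair
(the pullback of it along itself), and it is the coequaliser of its kernel
pair. -/
theorem surjective_on_composable_pairs_effective_epi (B C : Cat.{u, u})
    (E : B ⟶ C) (hsurj : Function.Surjective (mapCompPair E.toFunctor)) :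
    ∃ (K : Cat.{u, u}) (F1 F2 : K ⟶ B) (hpb : IsPullback F1 F2 E E),
      Nonempty (IsColimit (Cofork.ofπ E hpb.w)) := by
  refine ⟨pullback E E, pullback.fst E E, pullback.snd E E, IsPullback.of_hasPullback E E, ?_⟩
  -- surjectivity consequences
  have lift2 : ∀ {c₁ c₂ c₃ : C} (h : c₁ ⟶ c₂) (h' : c₂ ⟶ c₃),
      ∃ (b₁ b₂ b₃ : B) (f : b₁ ⟶ b₂) (f' : b₂ ⟶ b₃) (d₁ : E.toFunctor.obj b₁ = c₁) (d₂ : E.toFunctor.obj b₂ = c₂)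
        (d₃ : E.toFunctor.obj b₃ = c₃),
        E.toFunctor.map f = eqToHom d₁ ≫ h ≫ eqToHom d₂.symm ∧
        E.toFunctor.map f' = eqToHom d₂ ≫ h' ≫ eqToHom d₃.symm := by
    intro c₁ c₂ c₃ h h'
    obtain ⟨p, hp⟩ := hsurj ⟨c₁, c₂, c₃, (h, h')⟩
    obtain ⟨h₁, h₂, h₃, hf, hg⟩ := compPair_eq_elim hp
    exact ⟨p.1, p.2.1, p.2.2.1, p.2.2.2.1, p.2.2.2.2, h₁, h₂, h₃, hf, hg⟩
  have hobjsurj : ∀ c : C, ∃ b : B, E.toFunctor.obj b = c := by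
    intro c
    obtain ⟨b, _, _, _, _, e, _⟩ := lift2 (𝟙 c) (𝟙 c)
    exact ⟨b, e⟩
  choose ob hob using hobjsurj
  have hmor : ∀ (c c' : C) (h : c ⟶ c'), ∃ (b b' : B) (f : b ⟶ b')
      (d₁ : E.toFunctor.obj b = c) (d₂ : E.toFunctor.obj b' = c'),
      E.toFunctor.map f = eqToHom d₁ ≫ h ≫ eqToHom d₂.symm := by
    intro c c' h
    obtain ⟨b₁, b₂, _, f, _, d₁, d₂, _, hf, _⟩ := lift2 h (𝟙 c')
    exact ⟨b₁, b₂, f, d₁, d₂, hf⟩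
  choose b1 b2 lf e1 e2 hlf using hmor
  refine ⟨Cofork.IsColimit.ofExistsUnique ?_⟩
  intro s
  set G : B ⟶ s.pt := s.π with hG
  -- the kernel-pair conditions, via the concrete kernel category
  have cond : (pullback.fst E E) ≫ G = (pullback.snd E E) ≫ G := s.condition
  have cond₀ : kerFstCat B C E ≫ G = kerSndCat B C E ≫ G := by
    have h1 : pullback.lift (kerFstCat B C E) (kerSndCat B C E) (ker_wCat B C E) ≫ pullback.fst E E
        = kerFstCat B C E := pullback.lift_fst _ _ _
    have h2 : pullback.lift (kerFstCat B C E) (kerSndCat B C E) (ker_wCat B C E) ≫ pullback.snd E E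
        = kerSndCat B C E := pullback.lift_snd _ _ _
    calc kerFstCat B C E ≫ G
        = (pullback.lift (kerFstCat B C E) (kerSndCat B C E) (ker_wCat B C E) ≫
            pullback.fst E E) ≫ G := by rw [h1]
      _ = pullback.lift (kerFstCat B C E) (kerSndCat B C E) (ker_wCat B C E) ≫
            (pullback.fst E E ≫ G) := Category.assoc _ _ _
      _ = pullback.lift (kerFstCat B C E) (kerSndCat B C E) (ker_wCat B C E) ≫
            (pullback.snd E E ≫ G) := by rw [cond]
      _ = (pullback.lift (kerFstCat B C E) (kerSndCat B C E) (ker_wCat B C E) ≫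
            pullback.snd E E) ≫ G := (Category.assoc _ _ _).symm
      _ = kerSndCat B C E ≫ G := by rw [h2]
  have obj_eq : ∀ (b b' : B), E.toFunctor.obj b = E.toFunctor.obj b' → G.toFunctor.obj b = G.toFunctor.obj b' := by
    intro b b' h
    exact Functor.congr_obj (congrArg Cat.Hom.toFunctor cond₀) ⟨b, b', h⟩
  have map_eq : ∀ {b₁ b₂ b₁' b₂' : B} (f : b₁ ⟶ b₂) (g : b₁' ⟶ b₂')
      (h₁ : E.toFunctor.obj b₁ = E.toFunctor.obj b₁') (h₂ : E.toFunctor.obj b₂ = E.toFunctor.obj b₂'),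
      E.toFunctor.map f = eqToHom h₁ ≫ E.toFunctor.map g ≫ eqToHom h₂.symm →
      G.toFunctor.map f = eqToHom (obj_eq _ _ h₁) ≫ G.toFunctor.map g ≫ eqToHom (obj_eq _ _ h₂).symm := by
    intro b₁ b₂ b₁' b₂' f g h₁ h₂ he
    have := Functor.congr_hom (congrArg Cat.Hom.toFunctor cond₀)
      (X := ⟨b₁, b₁', h₁⟩) (Y := ⟨b₂, b₂', h₂⟩) ⟨f, g, he⟩
    exact this
  have Glf : ∀ {b b' : B} {c c' : C} (h : c ⟶ c') (f : b ⟶ b') (d₁ : E.toFunctor.obj b = c)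
      (d₂ : E.toFunctor.obj b' = c') (hf : E.toFunctor.map f = eqToHom d₁ ≫ h ≫ eqToHom d₂.symm),
      G.toFunctor.map (lf c c' h) = eqToHom (obj_eq _ _ ((e1 c c' h).trans d₁.symm)) ≫ G.toFunctor.map f ≫
        eqToHom (obj_eq _ _ ((e2 c c' h).trans d₂.symm)).symm := by
    intro b b' c c' h f d₁ d₂ hf
    apply map_eq _ _ ((e1 c c' h).trans d₁.symm) ((e2 c c' h).trans d₂.symm)
    rw [hlf c c' h, hf]
    simp
  -- the descended functor
  refine ⟨⟨{obj := fun c => G.toFunctor.obj (ob c)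
            map := fun {c c'} h =>
              eqToHom (obj_eq _ _ ((hob c).trans (e1 c c' h).symm)) ≫
                G.toFunctor.map (lf c c' h) ≫ eqToHom (obj_eq _ _ ((e2 c c' h).trans (hob c').symm))
            map_id := ?_
            map_comp := ?_ }⟩, ?_, ?_⟩
  · intro c
    have := Glf (𝟙 c) (𝟙 (ob c)) (hob c) (hob c) (by simp)
    simp [this]
  · intro c c' c'' h h'
    obtain ⟨b₁, b₂, b₃, f, f', d₁, d₂, d₃, hf, hf'⟩ := lift2 h h'
    have hcomp : E.toFunctor.map (f ≫ f') = eqToHom d₁ ≫ (h ≫ h') ≫ eqToHom d₃.symm := by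
      rw [Functor.map_comp, hf, hf']; simp
    have A := Glf h f d₁ d₂ hf
    have Bb := Glf h' f' d₂ d₃ hf'
    have Cc := Glf (h ≫ h') (f ≫ f') d₁ d₃ hcomp
    simp [A, Bb, Cc]
  · -- factorization
    show E ≫ _ = G
    apply Cat.ext
    refine CategoryTheory.Functor.ext
      (fun b => obj_eq (ob (E.toFunctor.obj b)) b (hob (E.toFunctor.obj b))) ?_
    intro b b' f
    have hGf := Glf (E.toFunctor.map f) f rfl rfl (by simp)
    show _ ≫ G.toFunctor.map (lf _ _ (E.toFunctor.map f)) ≫ _ = _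
    rw [hGf]
    simp
  · -- uniqueness
    intro m hm
    have hm' : E ≫ m = G := by
      rw [← hm]
      rfl
    have hobj' : ∀ c, m.toFunctor.obj c = G.toFunctor.obj (ob c) := by
      intro c
      conv_lhs => rw [← hob c]
      exact Functor.congr_obj (congrArg Cat.Hom.toFunctor hm') (ob c)
    refine Cat.ext (CategoryTheory.Functor.ext hobj' ?_)
    intro c c' h
    have hh : h = eqToHom (e1 c c' h).symm ≫ E.toFunctor.map (lf c c' h) ≫ eqToHom (e2 c c' h) := by
      rw [hlf c c' h]; simp
    have h3 : m.toFunctor.map (E.toFunctor.map (lf c c' h)) =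
        eqToHom (Functor.congr_obj (congrArg Cat.Hom.toFunctor hm') (b1 c c' h)) ≫ G.toFunctor.map (lf c c' h) ≫
          eqToHom (Functor.congr_obj (congrArg Cat.Hom.toFunctor hm') (b2 c c' h)).symm :=
      Functor.congr_hom (congrArg Cat.Hom.toFunctor hm') (lf c c' h)
    conv_lhs => rw [hh, Functor.map_comp, Functor.map_comp, eqToHom_map, eqToHom_map, h3]
    show _ = _ ≫ (_ ≫ G.toFunctor.map (lf c c' h) ≫ _) ≫ _
    simp
end
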